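/- Suppose the velocities satisfy the rolling constraints ẋ = r cos θ φ̇ and ẏ = r sin θ φ̇. Then the Euclidean inner product in ℝ⁵ of the velocity-gradient ∂L/∂q̇ of the WIP Lagrangian with the vector (ẏ, −ẋ, 0, 0, 0) — the time derivative of the generator (y, −x, 1, 0)_Q along the motion — equals −m_b b r sin α · φ̇ θ̇. This is the right-hand side of the nonholonomic momentum equation ṗ₂ = −m_b b r sin α φ̇ θ̇. -/

import Mathlib

open Real

/-- The α-dependent yaw inertia I_θ(α) of the WIP. -/
noncomputable def Itheta (m_b m_W b d I_Wzz I_Bxx I_Bz : ℝ) (α : ℝ) : ℝ :=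
  2 * I_Wzz + I_Bz * (cos α) ^ 2 + 2 * m_W * d ^ 2 + (I_Bxx + m_b * b ^ 2) * (sin α) ^ 2

/-- The WIP Lagrangian in variables q = (x, y, θ, α, φ), viewed as a function of
the velocity vector v = (ẋ, ẏ, θ̇, α̇, φ̇) ∈ ℝ⁵ for fixed (θ, α), with
f(α) = I_θ(α) + (d²/(2r²)) I_Wyy. -/
noncomputable def LwipVel (m_b m_W b g r d I_Wyy I_Wzz I_Bxx I_Byy I_Bz θ α : ℝ)
    (v : Fin 5 → ℝ) : ℝ :=
  1 / 2 * (m_b + 2 * m_W) * ((v 0) ^ 2 + (v 1) ^ 2)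
    + 1 / 2 * (Itheta m_b m_W b d I_Wzz I_Bxx I_Bz α + d ^ 2 / (2 * r ^ 2) * I_Wyy)
        * (v 2) ^ 2
    + 1 / 2 * (m_b * b ^ 2 + I_Byy) * (v 3) ^ 2
    + I_Wyy * (v 4) ^ 2
    + m_b * b * sin α * (v 2) * (-sin θ * v 0 + cos θ * v 1)
    + m_b * b * cos α * (v 3) * (cos θ * v 0 + sin θ * v 1)
    - m_b * b * g * cos α

/-- On the constraint distribution, pairing the velocity-gradient
of the WIP Lagrangian with (ẏ, −ẋ, 0, 0, 0) — the time derivative of the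
generator (y, −x, 1, 0)_Q along the motion — yields −m_b b r sin α · φ̇ θ̇, the
right-hand side of ṗ₂ = −m_b b r sin α φ̇ θ̇. -/
theorem wip_momentum_equation_rhs_p2
    (m_b m_W b r d g I_Wyy I_Wzz I_Bxx I_Byy I_Bz : ℝ)
    (hmb : 0 < m_b) (hmW : 0 < m_W) (hb : 0 < b) (hr : 0 < r) (hd : 0 < d)
    (hg : 0 < g) (hIWyy : 0 < I_Wyy) (hIWzz : 0 < I_Wzz) (hIBxx : 0 < I_Bxx)
    (hIByy : 0 < I_Byy) (hIBz : 0 < I_Bz)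
    (θ α : ℝ) (v : Fin 5 → ℝ)
    (hvx : v 0 = r * cos θ * v 4) (hvy : v 1 = r * sin θ * v 4) :
    fderiv ℝ (LwipVel m_b m_W b g r d I_Wyy I_Wzz I_Bxx I_Byy I_Bz θ α) v
        ![v 1, -(v 0), 0, 0, 0]
      = -(m_b * b * r * sin α * v 4 * v 2) := by

  set L := LwipVel m_b m_W b g r d I_Wyy I_Wzz I_Bxx I_Byy I_Bz θ α with hLdef
  set w : Fin 5 → ℝ := ![v 1, -(v 0), 0, 0, 0] with hwdef
  have hw0 : w 0 = v 1 := rfl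
  have hw1 : w 1 = -(v 0) := rfl
  have hw2 : w 2 = 0 := rfl
  have hw3 : w 3 = 0 := rfl
  have hw4 : w 4 = 0 := rfl
  have hdiff : DifferentiableAt ℝ L v := by
    rw [hLdef]; unfold LwipVel Itheta; fun_prop
  -- chain rule: fderiv L v w is the derivative of L along the line t ↦ v + t • w
  have hline : HasDerivAt (fun t : ℝ => v + t • w) w 0 := by
    simpa using ((hasDerivAt_id (0:ℝ)).smul_const w).const_add v
  have h0 : v + (0:ℝ) • w = v := by simp
  have hg : HasFDerivAt L (fderiv ℝ L v) (v + (0:ℝ) • w) := by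
    rw [h0]; exact hdiff.hasFDerivAt
  have hcomp : HasDerivAt (fun t : ℝ => L (v + t • w)) (fderiv ℝ L v w) 0 := by
    exact hg.comp_hasDerivAt 0 hline
  -- the restriction of L to the line is an explicit quadratic in t
  set c0 : ℝ := L v with hc0
  set c1 : ℝ := m_b * b * sin α * (v 2) * (-sin θ * (v 1) + cos θ * (-(v 0)))
      + m_b * b * cos α * (v 3) * (cos θ * (v 1) + sin θ * (-(v 0))) with hc1
  set c2 : ℝ := 1 / 2 * (m_b + 2 * m_W) * ((v 1) ^ 2 + (v 0) ^ 2) with hc2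
  have hquad : (fun t : ℝ => L (v + t • w)) = fun t : ℝ => c0 + c1 * t + c2 * t ^ 2 := by
    funext t
    rw [hc0, hc1, hc2, hLdef]
    unfold LwipVel
    simp only [Pi.add_apply, Pi.smul_apply, smul_eq_mul, hw0, hw1, hw2, hw3, hw4]
    ring
  have hpoly : HasDerivAt (fun t : ℝ => c0 + c1 * t + c2 * t ^ 2) c1 0 := by
    have h1 : HasDerivAt (fun t : ℝ => c0 + c1 * t) c1 0 := by
      simpa using ((hasDerivAt_id (0:ℝ)).const_mul c1).const_add c0
    have h2 : HasDerivAt (fun t : ℝ => c2 * t ^ 2) 0 0 := by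
      simpa using (hasDerivAt_pow 2 (0:ℝ)).const_mul c2
    have h3 := h1.add h2; rw [add_zero] at h3; exact h3
  have hval : fderiv ℝ L v w = c1 := hcomp.unique (hquad ▸ hpoly)
  rw [hval, hc1, hvx, hvy]
  linear_combination (-(m_b * b * r * sin α * v 2 * v 4)) * sin_sq_add_cos_sq θ
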